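/- Let T be an interval exchange transformation without connection of length ≥ 1. Then for every word w ∈ L(T), the extension graph E(w) is acyclic. -/

import Mathlib

namespace Paper

/-- An interval exchange transformation (with flips) on the open interval `]l, r[`,
with intervals indexed by the finite alphabet `A` : the families `(Ia a)` and `(Ja a)`
are partitions of `]l, r[` minus `Card A - 1` points into nonempty open intervals
(pairwise disjoint, hence ordered by suitable total orders on `A`), with `Ia a` and
`Ja a` of the same length, and the restriction of `T` to `Ia a` is either a translation
or a symmetry from `Ia a` onto `Ja a`. -/
structure IET (A : Type*) [Fintype A] where
  l : ℝ
  r : ℝ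
  hlr : l < r
  Ia : A → Set ℝ
  Ja : A → Set ℝ
  T : ℝ → ℝ
  hIa : ∀ a, ∃ p q : ℝ, p < q ∧ Ia a = Set.Ioo p q
  hJa : ∀ a, ∃ p q : ℝ, p < q ∧ Ja a = Set.Ioo p q
  hIsub : ∀ a, Ia a ⊆ Set.Ioo l r
  hJsub : ∀ a, Ja a ⊆ Set.Ioo l r
  hIdisj : Pairwise (Function.onFun Disjoint Ia)
  hJdisj : Pairwise (Function.onFun Disjoint Ja)
  hIcard : (Set.Ioo l r \ ⋃ a, Ia a).ncard = Fintype.card A - 1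
  hJcard : (Set.Ioo l r \ ⋃ a, Ja a).ncard = Fintype.card A - 1
  hlen : ∀ a, MeasureTheory.volume (Ia a) = MeasureTheory.volume (Ja a)
  hTimage : ∀ a, T '' Ia a = Ja a
  hTiso : ∀ a, (∃ t : ℝ, ∀ x ∈ Ia a, T x = x + t) ∨ (∃ s : ℝ, ∀ x ∈ Ia a, T x = s - x)

namespace IET

variable {A : Type*} [Fintype A] (E : IET A)

/-- The interval `I_w` of points whose orbit starts by visiting the intervals
prescribed by the word `w` (with `I_ε = ]l, r[`). -/
def Iw (w : List A) : Set ℝ :=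
  {x ∈ Set.Ioo E.l E.r | ∀ i : Fin w.length, E.T^[(i : ℕ)] x ∈ E.Ia (w.get i)}

/-- `J_w = T^{|w|}(I_w)`. -/
def Jw (w : List A) : Set ℝ := E.T^[w.length] '' E.Iw w

/-- The natural coding language `L(T)`: the set of factors of the natural codings
`Σ_T(z)` of points `z` whose whole orbit stays in `⋃ a, I_a`. -/
def lang : Set (List A) :=
  {w | ∃ z ∈ Set.Ioo E.l E.r, (∀ n : ℕ, E.T^[n] z ∈ ⋃ a, E.Ia a) ∧
        ∃ k : ℕ, ∀ i : Fin w.length, E.T^[k + (i : ℕ)] z ∈ E.Ia (w.get i)}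

/-- The singularities of `T`: the points of `]l, r[` separating the intervals `I_a`. -/
def singT : Set ℝ := Set.Ioo E.l E.r \ ⋃ a, E.Ia a

/-- The singularities of `T⁻¹`: the points of `]l, r[` separating the intervals `J_a`. -/
def singTinv : Set ℝ := Set.Ioo E.l E.r \ ⋃ a, E.Ja a

/-- A connection of length `n`: a triple `(x, y, n)` where `x` is a singularity of
`T⁻¹`, `y` is a singularity of `T`, and `Tⁿ x = y`, the orbit of `x` being defined
up to time `n`. -/
def IsConnection (x y : ℝ) (n : ℕ) : Prop :=
  x ∈ E.singTinv ∧ y ∈ E.singT ∧ E.T^[n] x = y ∧ ∀ i < n, E.T^[i] x ∉ E.singT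

end IET

variable {A : Type*}

/-- The vertex set of the extension graph of `w` : the disjoint union of (a copy of)
`L_S(w)` and (a copy of) `R_S(w)`. -/
def extVerts (S : Set (List A)) (w : List A) : Set (A ⊕ A) :=
  {v | Sum.elim (fun a => a :: w ∈ S) (fun b => w ++ [b] ∈ S) v}

/-- The edge relation of the extension graph of `w`: `1 ⊗ a` is joined to `b ⊗ 1`
whenever `awb ∈ S`. -/
def extRel (S : Set (List A)) (w : List A) : (A ⊕ A) → (A ⊕ A) → Prop :=
  fun u v => ∃ a b : A, u = Sum.inl a ∧ v = Sum.inr b ∧ a :: (w ++ [b]) ∈ S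

/-- The extension graph `E(w)` of `w` with respect to `S`. -/
def extGraph (S : Set (List A)) (w : List A) : SimpleGraph (extVerts S w) :=
  SimpleGraph.induce (extVerts S w) (SimpleGraph.fromRel (extRel S w))

end Paper

section AuxForProof

open SimpleGraph

theorem Aux.getVert_eq_support' {V : Type*} {G : SimpleGraph V} {u v : V} (p : G.Walk u v)
    (i : ℕ) (h : i ≤ p.length) :
    p.getVert i = p.support[i]'(by simp [Walk.length_support]; omega) := by
  induction p generalizing i with
  | nil => have : i = 0 := by simpa using h
           subst this; simp
  | cons ha q ih =>
    cases i with
    | zero => simp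
    | succ j => simp only [Walk.getVert_cons_succ, Walk.support_cons, List.getElem_cons_succ]
                exact ih j (by simpa using h)

theorem Aux.cycle_getVert_inj {V : Type*} {G : SimpleGraph V} {v : V} {p : G.Walk v v}
    (hp : p.IsCycle)
    {i j : ℕ} (hi : i < p.length) (hj : j < p.length) (h : p.getVert i = p.getVert j) : i = j := by
  have hnd : p.support.tail.Nodup := hp.support_nodup
  have hlt : p.support.tail.length = p.length := by
    rw [List.length_tail, p.length_support]; omega
  have h3 := hp.three_le_length
  have hgt : ∀ k, k < p.length → ∀ (hk : k < p.support.tail.length),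
      p.getVert (k + 1) = p.support.tail[k]'hk := by
    intro k hk hk'
    rw [Aux.getVert_eq_support' p (k+1) (by omega), List.getElem_of_eq p.support_eq_cons]
    simp
  have hlast : p.support.tail[p.length - 1]'(by omega) = v := by
    have e : p.length - 1 + 1 = p.length := by omega
    have h1 := hgt (p.length - 1) (by omega) (by omega)
    have h2 : p.getVert (p.length - 1 + 1) = v := by rw [e]; exact p.getVert_length
    exact h1.symm.trans h2
  match i, j, hi, hj, h with
  | 0, 0, _, _, _ => rfl
  | 0, j'+1, hi, hj, h =>
    exfalso
    rw [p.getVert_zero, hgt j' (by omega) (by omega)] at h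
    have := hnd.getElem_inj_iff.mp (h.symm.trans hlast.symm)
    omega
  | i'+1, 0, hi, hj, h =>
    exfalso
    rw [p.getVert_zero, hgt i' (by omega) (by omega)] at h
    have := hnd.getElem_inj_iff.mp (h.trans hlast.symm)
    omega
  | i'+1, j'+1, hi, hj, h =>
    rw [hgt i' (by omega) (by omega), hgt j' (by omega) (by omega)] at h
    have := hnd.getElem_inj_iff.mp h
    omega

/-- Abstract acyclicity lemma: a graph whose vertices carry order-convex real sets,
such that adjacent vertices have intersecting sets and distinct vertices with a common
neighbor have disjoint sets, is acyclic. -/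
theorem Aux.acyclic_of_convex {V : Type*} (G : SimpleGraph V) (S : V → Set ℝ)
    (hconv : ∀ u, (S u).OrdConnected)
    (hadj : ∀ u v, G.Adj u v → (S u ∩ S v).Nonempty)
    (hdisj : ∀ u v w, G.Adj u v → G.Adj v w → u ≠ w → Disjoint (S u) (S w)) :
    G.IsAcyclic := by
  intro v p hp
  set n := p.length with hn
  have h3 : 3 ≤ n := hp.three_le_length
  have hn0 : 0 < n := by omega
  set c : ℕ → V := fun i => p.getVert (i % n) with hc
  have hmod1 : ∀ i : ℕ, (i % n + 1) % n = (i + 1) % n := by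
    intro i
    conv_rhs => rw [Nat.add_mod]
    rw [Nat.mod_eq_of_lt (show (1:ℕ) < n by omega)]
  have hcc : ∀ i, c (i % n) = c i := by
    intro i
    show p.getVert (i % n % n) = p.getVert (i % n)
    rw [Nat.mod_mod_of_dvd i dvd_rfl]
  have hcc1 : ∀ i, c (i % n + 1) = c (i + 1) := by
    intro i
    show p.getVert ((i % n + 1) % n) = p.getVert ((i + 1) % n)
    rw [hmod1 i]
  have hAdj : ∀ i, G.Adj (c i) (c (i + 1)) := by
    intro i
    have hin : i % n < n := Nat.mod_lt _ hn0
    show G.Adj (p.getVert (i % n)) (p.getVert ((i + 1) % n))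
    rw [← hmod1 i]
    by_cases hlt : i % n + 1 < n
    · rw [Nat.mod_eq_of_lt hlt]
      exact p.adj_getVert_succ (by omega)
    · have heq : i % n + 1 = n := by omega
      have h2 := p.adj_getVert_succ (i := i % n) (by omega : i % n < p.length)
      rw [show i % n + 1 = p.length from heq, p.getVert_length] at h2
      rw [heq, Nat.mod_self, p.getVert_zero]
      exact h2
  have hinj : ∀ i j, c i = c j → i % n = j % n := by
    intro i j hij
    exact Aux.cycle_getVert_inj hp (Nat.mod_lt _ hn0) (Nat.mod_lt _ hn0) hij
  have hstep2 : ∀ a : ℕ, a % n ≠ (a + 2) % n := by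
    intro a hA
    have hd : n ∣ 2 := by
      have := (Nat.modEq_iff_dvd' (Nat.le_add_right a 2)).mp hA
      simpa using this
    have := Nat.le_of_dvd (by norm_num) hd
    omega
  set x : ℕ → ℝ := fun i => (hadj _ _ (hAdj (i % n))).choose with hx
  have hxmem : ∀ i, x i ∈ S (c i) ∩ S (c (i + 1)) := by
    intro i
    have e1 : c i = c (i % n) := (hcc i).symm
    have e2 : c (i + 1) = c (i % n + 1) := (hcc1 i).symm
    rw [e1, e2]
    exact (hadj _ _ (hAdj (i % n))).choose_spec
  have hxeq : ∀ i j, i % n = j % n → x i = x j := by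
    intro i j hij
    show (hadj _ _ (hAdj (i % n))).choose = (hadj _ _ (hAdj (j % n))).choose
    congr 1
    all_goals rw [hij]
  obtain ⟨m0, hm0, hmax0⟩ := Finset.exists_max_image (Finset.range n) x ⟨0, by simpa using hn0⟩
  set m := m0 + n with hm
  have hmax : ∀ i, x i ≤ x m := by
    intro i
    have h1 : x m = x m0 := hxeq m m0 (Nat.add_mod_right m0 n)
    have h2 : x i = x (i % n) := hxeq i (i % n) (by rw [Nat.mod_mod_of_dvd i dvd_rfl])
    rw [h1, h2]
    exact hmax0 _ (Finset.mem_range.mpr (Nat.mod_lt _ hn0))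
  have e1 : m - 1 + 1 = m := by omega
  have hx1 : x (m - 1) ∈ S (c (m - 1)) ∩ S (c m) := by
    have := hxmem (m - 1); rwa [e1] at this
  have hx2 := hxmem m
  have hx3 := hxmem (m + 1)
  rcases le_or_gt (x (m + 1)) (x (m - 1)) with hle | hlt
  · have hmem : x (m - 1) ∈ S (c (m + 1)) :=
      (hconv (c (m + 1))).out hx3.1 hx2.2 ⟨hle, hmax _⟩
    have hne : c (m - 1) ≠ c (m + 1) := by
      intro hcontra
      refine hstep2 (m - 1) ?_
      rw [show m - 1 + 2 = m + 1 by omega]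
      exact hinj _ _ hcontra
    have hd := hdisj (c (m - 1)) (c m) (c (m + 1))
      (by have := hAdj (m - 1); rwa [e1] at this) (hAdj m) hne
    exact (Set.disjoint_left.mp hd hx1.1) hmem
  · have hmem : x (m + 1) ∈ S (c m) :=
      (hconv (c m)).out hx1.2 hx2.1 ⟨hlt.le, hmax _⟩
    have hne : c m ≠ c (m + 2) := by
      intro hcontra
      exact hstep2 m (hinj _ _ hcontra)
    have hd := hdisj (c m) (c (m + 1)) (c (m + 2)) (hAdj m) (hAdj (m + 1)) hne
    exact (Set.disjoint_left.mp hd hmem) hx3.2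

namespace Paper.IET

variable {A : Type*} [Fintype A] (E : IET A)

theorem aux_mem_iw_cons {a : A} {u : List A} {x : ℝ} :
    x ∈ E.Iw (a :: u) ↔ x ∈ E.Ia a ∧ E.T x ∈ E.Iw u := by
  constructor
  · rintro ⟨hIoo, hall⟩
    have h0 : x ∈ E.Ia a := by
      have := hall ⟨0, by simp⟩
      simpa using this
    refine ⟨h0, ?_, ?_⟩
    · have : E.T x ∈ E.Ja a := by
        rw [← E.hTimage a]; exact Set.mem_image_of_mem _ h0
      exact E.hJsub a this
    · intro i
      have := hall ⟨i.val + 1, by simp⟩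
      simp only [List.get_eq_getElem, List.getElem_cons_succ] at this ⊢
      rwa [Function.iterate_succ_apply] at this
  · rintro ⟨h0, hT⟩
    refine ⟨E.hIsub a h0, ?_⟩
    intro i
    match i with
    | ⟨0, _⟩ => simpa using h0
    | ⟨j+1, hj⟩ =>
      have := hT.2 ⟨j, by simpa using hj⟩
      simp only [List.get_eq_getElem, List.getElem_cons_succ]
      rwa [Function.iterate_succ_apply]

theorem aux_iw_ordConnected (u : List A) : (E.Iw u).OrdConnected := by
  induction u with
  | nil =>
    refine ⟨fun x hx y hy z hz => ⟨⟨lt_of_lt_of_le hx.1.1 hz.1, lt_of_le_of_lt hz.2 hy.1.2⟩, ?_⟩⟩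
    intro i
    exact i.elim0
  | cons a u ih =>
    refine ⟨fun x hx y hy z hz => ?_⟩
    rw [E.aux_mem_iw_cons] at hx hy ⊢
    obtain ⟨p, q, hpq, hIa⟩ := E.hIa a
    have hza : z ∈ E.Ia a := by
      rw [hIa] at hx hy ⊢
      exact ⟨lt_of_lt_of_le hx.1.1 hz.1, lt_of_le_of_lt hz.2 hy.1.2⟩
    refine ⟨hza, ?_⟩
    rcases E.hTiso a with ⟨t, ht⟩ | ⟨s, hs⟩
    · rw [ht z hza]
      have h1 : x + t ∈ E.Iw u := by rw [← ht x hx.1]; exact hx.2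
      have h2 : y + t ∈ E.Iw u := by rw [← ht y hy.1]; exact hy.2
      exact ih.out h1 h2 ⟨by linarith [hz.1], by linarith [hz.2]⟩
    · rw [hs z hza]
      have h1 : s - y ∈ E.Iw u := by rw [← hs y hy.1]; exact hy.2
      have h2 : s - x ∈ E.Iw u := by rw [← hs x hx.1]; exact hx.2
      exact ih.out h1 h2 ⟨by linarith [hz.2], by linarith [hz.1]⟩

theorem aux_iw_concat_disjoint (w : List A) {b b' : A} (h : b ≠ b') :
    Disjoint (E.Iw (w ++ [b])) (E.Iw (w ++ [b'])) := by
  rw [Set.disjoint_left]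
  intro x hx hx'
  have h1 := hx.2 ⟨w.length, by simp⟩
  have h2 := hx'.2 ⟨w.length, by simp⟩
  simp only [List.get_eq_getElem, List.getElem_concat_length] at h1 h2
  exact Set.disjoint_left.mp (E.hIdisj h) h1 h2

theorem aux_lang_witness {a : A} {w' : List A} (h : (a :: w') ∈ E.lang) :
    ∃ y, y ∈ E.Ja a ∧ y ∈ E.Iw w' := by
  obtain ⟨z, hz, horb, k, hk⟩ := h
  have h0 : E.T^[k] z ∈ E.Ia a := by
    have := hk ⟨0, by simp⟩
    simpa using this
  have hJ : E.T^[k+1] z ∈ E.Ja a := by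
    rw [Function.iterate_succ_apply', ← E.hTimage a]
    exact Set.mem_image_of_mem _ h0
  refine ⟨E.T^[k+1] z, hJ, E.hJsub a hJ, ?_⟩
  intro i
  have := hk ⟨i.val + 1, by simp⟩
  simp only [List.get_eq_getElem, List.getElem_cons_succ] at this ⊢
  rw [← Function.iterate_add_apply]
  rw [show i.val + (k + 1) = k + (i.val + 1) by omega]
  exact this

end Paper.IET

end AuxForProof


open Paper Paper.IET in
/-- For an interval exchange transformation without connection of length `≥ 1`,
the extension graph `E(w)` of every word `w ∈ L(T)` is acyclic. -/
theorem extGraph_acyclic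
    {A : Type*} [Fintype A] (E : IET A)
    (hnc : ∀ x y : ℝ, ∀ n : ℕ, E.IsConnection x y n → n = 0) :
    ∀ w ∈ E.lang, (extGraph E.lang w).IsAcyclic := by
  intro w _hw
  have shape : ∀ s t : ↥(extVerts E.lang w), (extGraph E.lang w).Adj s t →
      (SimpleGraph.fromRel (extRel E.lang w)).Adj s.val t.val := by
    intro s t h
    simpa [extGraph, SimpleGraph.induce] using h
  apply Aux.acyclic_of_convex _
    (fun u => Sum.elim (fun a => E.Ja a) (fun b => E.Iw (w ++ [b])) u.val)
  · rintro ⟨val, hval⟩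
    cases val with
    | inl a =>
      obtain ⟨p, q, hpq, hJ⟩ := E.hJa a
      simp only [Sum.elim_inl]
      rw [hJ]
      exact Set.ordConnected_Ioo
    | inr b =>
      simpa using E.aux_iw_ordConnected (w ++ [b])
  · intro u v huv
    have hadj := shape u v huv
    rw [SimpleGraph.fromRel_adj] at hadj
    obtain ⟨hne, hrel | hrel⟩ := hadj
    · obtain ⟨a, b, hu, hv, hlang⟩ := hrel
      obtain ⟨y, hy1, hy2⟩ := E.aux_lang_witness (w' := w ++ [b]) hlang
      refine ⟨y, ?_, ?_⟩
      · simp only [hu, Sum.elim_inl]; exact hy1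
      · simp only [hv, Sum.elim_inr]; exact hy2
    · obtain ⟨a, b, hv, hu, hlang⟩ := hrel
      obtain ⟨y, hy1, hy2⟩ := E.aux_lang_witness (w' := w ++ [b]) hlang
      refine ⟨y, ?_, ?_⟩
      · simp only [hu, Sum.elim_inr]; exact hy2
      · simp only [hv, Sum.elim_inl]; exact hy1
  · intro u v z h1 h2 hne
    have hs1 := shape u v h1
    have hs2 := shape v z h2
    rw [SimpleGraph.fromRel_adj] at hs1 hs2
    obtain ⟨-, hr1 | hr1⟩ := hs1 <;> obtain ⟨-, hr2 | hr2⟩ := hs2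
    · -- u = inl, v = inr ; v = inl : contradiction
      obtain ⟨a, b, hu, hv, -⟩ := hr1
      obtain ⟨a', b', hv', hz, -⟩ := hr2
      rw [hv] at hv'; exact absurd hv' (by simp)
    · -- u = inl a, v = inr, z = inl a'
      obtain ⟨a, b, hu, hv, -⟩ := hr1
      obtain ⟨a', b', hz, hv', -⟩ := hr2
      have haa : a ≠ a' := by
        intro hEq
        apply hne
        apply Subtype.ext
        rw [hu, hz, hEq]
      simp only [hu, hz, Sum.elim_inl]
      exact E.hJdisj haa
    · -- u = inr b, v = inl a, z = inr b'
      obtain ⟨a, b, hv, hu, -⟩ := hr1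
      obtain ⟨a', b', hv', hz, -⟩ := hr2
      have hbb : b ≠ b' := by
        intro hEq
        apply hne
        apply Subtype.ext
        rw [hu, hz, hEq]
      simp only [hu, hz, Sum.elim_inr]
      exact E.aux_iw_concat_disjoint w hbb
    · -- v = inl and v = inr : contradiction
      obtain ⟨a, b, hv, hu, -⟩ := hr1
      obtain ⟨a', b', hz', hv2, -⟩ := hr2
      rw [hv] at hv2; exact absurd hv2 (by simp)
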